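/- Let g be a nondegenerate symmetric bilinear form on a 4-dimensional real vector space V and let R be an algebraic curvature tensor on (V,g) (i.e., R_{ijkl} is antisymmetric in the first and last pairs, symmetric under exchange of the pairs, and satisfies the first Bianchi identity). Suppose there exist linearly independent vectors u, v ∈ V with the restriction of g to span(u,v) nondegenerate, such that R(u,·,·,·) = 0 and R(v,·,·,·) = 0. If the scalar curvature g^{ik} g^{jl} R_{ijkl} vanishes, then R = 0. -/

import Mathlib

open Matrix

lemma sum4_entry (g : Matrix (Fin 4) (Fin 4) ℝ) (x y : Fin 4 → ℝ) :
    ∑ n, (∑ m, x m * g m n) * y n = ∑ i, ∑ j, x i * g i j * y j := by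
  simp only [Fin.sum_univ_four]; ring

lemma ip_symm (g : Matrix (Fin 4) (Fin 4) ℝ) (hgs : gᵀ = g) (x y : Fin 4 → ℝ) :
    ∑ i, ∑ j, x i * g i j * y j = ∑ i, ∑ j, y i * g i j * x j := by
  have hs : ∀ i j : Fin 4, g i j = g j i := by
    intro i j
    have := congrFun (congrFun hgs j) i
    rw [Matrix.transpose_apply] at this
    exact this
  simp only [Fin.sum_univ_four, hs 1 0, hs 2 0, hs 2 1, hs 3 0, hs 3 1, hs 3 2]
  ring

lemma ip_lin (g : Matrix (Fin 4) (Fin 4) ℝ) (x y z w : Fin 4 → ℝ) (r1 r2 : ℝ) :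
    ∑ i, ∑ j, x i * g i j * (y j - r1 * z j - r2 * w j)
      = (∑ i, ∑ j, x i * g i j * y j) - r1 * (∑ i, ∑ j, x i * g i j * z j)
        - r2 * (∑ i, ∑ j, x i * g i j * w j) := by
  simp only [Fin.sum_univ_four]; ring

lemma exp_lemma (M : Fin 4 → Fin 4 → ℝ) (u v s t cu cv al be : Fin 4 → ℝ)
    (hdelta : ∀ i m, (if i = m then (1:ℝ) else 0) = cu i * u m + cv i * v m + al i * s m + be i * t m)
    (hu1 : ∀ j, ∑ i, u i * M i j = 0) (hv1 : ∀ j, ∑ i, v i * M i j = 0)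
    (hu2 : ∀ i, ∑ j, u j * M i j = 0) (hv2 : ∀ i, ∑ j, v j * M i j = 0)
    (hanti : ∀ i j, M i j = - M j i) :
    ∀ i j, M i j = (al i * be j - al j * be i) * (∑ m, ∑ n, s m * t n * M m n) := by
  have h2 : ∀ i j, M i j = al j * (∑ n, s n * M i n) + be j * (∑ n, t n * M i n) := by
    intro i j
    calc M i j = ∑ n, (if j = n then (1:ℝ) else 0) * M i n := by simp
    _ = ∑ n, (cu j * u n + cv j * v n + al j * s n + be j * t n) * M i n :=
        Finset.sum_congr rfl fun n _ => by rw [← hdelta]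
    _ = cu j * (∑ n, u n * M i n) + cv j * (∑ n, v n * M i n)
        + al j * (∑ n, s n * M i n) + be j * (∑ n, t n * M i n) := by
        simp only [Fin.sum_univ_four]; ring
    _ = _ := by rw [hu2 i, hv2 i]; ring
  have h1 : ∀ i j, M i j = al i * (∑ m, s m * M m j) + be i * (∑ m, t m * M m j) := by
    intro i j
    calc M i j = ∑ m, (if i = m then (1:ℝ) else 0) * M m j := by simp
    _ = ∑ m, (cu i * u m + cv i * v m + al i * s m + be i * t m) * M m j :=
        Finset.sum_congr rfl fun m _ => by rw [← hdelta]
    _ = cu i * (∑ m, u m * M m j) + cv i * (∑ m, v m * M m j)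
        + al i * (∑ m, s m * M m j) + be i * (∑ m, t m * M m j) := by
        simp only [Fin.sum_univ_four]; ring
    _ = _ := by rw [hu1 j, hv1 j]; ring
  have hd : ∀ i, M i i = 0 := fun i => by linarith [hanti i i]
  have hW : ∀ x y : Fin 4 → ℝ, (∑ m, ∑ n, x m * y n * M m n) = - ∑ m, ∑ n, y m * x n * M m n := by
    intro x y
    simp only [Fin.sum_univ_four, hd, hanti 1 0, hanti 2 0, hanti 2 1, hanti 3 0, hanti 3 1,
      hanti 3 2]
    ring
  have hss : (∑ m, ∑ n, s m * s n * M m n) = 0 := by have := hW s s; linarith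
  have htt : (∑ m, ∑ n, t m * t n * M m n) = 0 := by have := hW t t; linarith
  intro i j
  have h3 : ∀ x : Fin 4 → ℝ, (∑ m, x m * M m j)
      = al j * (∑ m, ∑ n, x m * s n * M m n) + be j * (∑ m, ∑ n, x m * t n * M m n) := by
    intro x
    calc ∑ m, x m * M m j = ∑ m, x m * (al j * (∑ n, s n * M m n) + be j * (∑ n, t n * M m n)) :=
        Finset.sum_congr rfl fun m _ => by rw [← h2 m j]
    _ = _ := by simp only [Fin.sum_univ_four]; ring
  linear_combination (h1 i j) + al i * (h3 s) + be i * (h3 t) + (al i * al j) * hss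
    + (be i * be j) * htt + (be i * al j) * (hW t s)

lemma scal_expand (G : Matrix (Fin 4) (Fin 4) ℝ) (al be : Fin 4 → ℝ) (κ : ℝ) :
    ∑ i, ∑ j, ∑ k, ∑ l, G i k * G j l *
      ((al i * be j - al j * be i) * (al k * be l - al l * be k) * κ)
    = κ * (2 * ((∑ i, ∑ k, G i k * al i * al k) * (∑ i, ∑ k, G i k * be i * be k)
        - (∑ i, ∑ k, G i k * al i * be k) * (∑ i, ∑ k, G i k * be i * al k))) := by
  simp only [Fin.sum_univ_four]
  ring

lemma eta_fin_four (A : Matrix (Fin 4) (Fin 4) ℝ) :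
    A = !![A 0 0, A 0 1, A 0 2, A 0 3;
           A 1 0, A 1 1, A 1 2, A 1 3;
           A 2 0, A 2 1, A 2 2, A 2 3;
           A 3 0, A 3 1, A 3 2, A 3 3] := by
  ext i j
  fin_cases i <;> fin_cases j <;> rfl

lemma det_block (a b c sa sb sc : ℝ) :
    (!![a, b, 0, 0; b, c, 0, 0; 0, 0, sa, sb; 0, 0, sb, sc] : Matrix (Fin 4) (Fin 4) ℝ).det
      = (a*c - b^2) * (sa*sc - sb^2) := by
  simp [Matrix.det_succ_row_zero, Fin.sum_univ_succ, Matrix.vecHead, Matrix.vecTail,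
    Fin.succAbove]
  ring

lemma block_inv (a b c sa sb sc : ℝ) (hD : a*c - b^2 ≠ 0) (hDS : sa*sc - sb^2 ≠ 0) :
    (!![a, b, 0, 0; b, c, 0, 0; 0, 0, sa, sb; 0, 0, sb, sc] : Matrix (Fin 4) (Fin 4) ℝ) *
      !![c/(a*c-b^2), -(b/(a*c-b^2)), 0, 0; -(b/(a*c-b^2)), a/(a*c-b^2), 0, 0;
         0, 0, sc/(sa*sc-sb^2), -(sb/(sa*sc-sb^2)); 0, 0, -(sb/(sa*sc-sb^2)), sa/(sa*sc-sb^2)] = 1 := by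
  ext p q
  fin_cases p <;> fin_cases q <;>
    simp [Matrix.mul_apply, Fin.sum_univ_four, Matrix.one_apply, Matrix.vecHead, Matrix.vecTail] <;>
    field_simp <;> ring

set_option maxHeartbeats 2000000 in
theorem stmt_4 (g : Matrix (Fin 4) (Fin 4) ℝ) (hgs : gᵀ = g) (hg : IsUnit g.det)
    (R : Fin 4 → Fin 4 → Fin 4 → Fin 4 → ℝ)
    (hR1 : ∀ i j k l, R i j k l = - R j i k l)
    (hR2 : ∀ i j k l, R i j k l = - R i j l k)
    (hR3 : ∀ i j k l, R i j k l = R k l i j)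
    (hbianchi : ∀ i j k l, R i j k l + R i k l j + R i l j k = 0)
    (u v : Fin 4 → ℝ)
    (hindep : LinearIndependent ℝ ![u, v])
    (hnondeg : (∑ i, ∑ j, u i * g i j * u j) * (∑ i, ∑ j, v i * g i j * v j)
        - (∑ i, ∑ j, u i * g i j * v j) ^ 2 ≠ 0)
    (hu : ∀ j k l, ∑ i, u i * R i j k l = 0)
    (hv : ∀ j k l, ∑ i, v i * R i j k l = 0)
    (hscal : ∑ i, ∑ j, ∑ k, ∑ l, g⁻¹ i k * g⁻¹ j l * R i j k l = 0) :
    ∀ i j k l, R i j k l = 0 := by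
  -- extract a nonzero 2×2 minor of the pair (u, v)
  have hpair := LinearIndependent.pair_iff.mp hindep
  have hmin : ∃ i j : Fin 4, u i * v j - u j * v i ≠ 0 := by
    by_contra hc
    push_neg at hc
    have hu0 : u ≠ 0 := by simpa using hindep.ne_zero 0
    obtain ⟨i0, hi0⟩ : ∃ i, u i ≠ 0 := by
      by_contra h; push_neg at h; exact hu0 (funext h)
    have hz := hpair (v i0) (-u i0) (by
      funext m
      simp only [Pi.add_apply, Pi.smul_apply, smul_eq_mul, Pi.zero_apply]
      linear_combination -hc i0 m)
    exact hi0 (neg_eq_zero.mp hz.2)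
  obtain ⟨i0, j0, hm⟩ := hmin
  have HKL : ∀ i j : Fin 4, ∃ k l : Fin 4, k ≠ l ∧ i ≠ k ∧ j ≠ k ∧ i ≠ l ∧ j ≠ l := by decide
  obtain ⟨k0, l0, hkl, hik, hjk, hil, hjl⟩ := HKL i0 j0
  -- set up the Gram data of u, v
  set a := ∑ i, ∑ j, u i * g i j * u j with ha
  set b := ∑ i, ∑ j, u i * g i j * v j with hb
  set c := ∑ i, ∑ j, v i * g i j * v j with hc
  -- coordinate vectors and projections
  set ek : Fin 4 → ℝ := fun m => if m = k0 then (1:ℝ) else 0 with hek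
  set el : Fin 4 → ℝ := fun m => if m = l0 then (1:ℝ) else 0 with hel
  set pu := ∑ i, ∑ j, u i * g i j * ek j with hpu
  set pv := ∑ i, ∑ j, v i * g i j * ek j with hpv
  set qu := ∑ i, ∑ j, u i * g i j * el j with hqu
  set qv := ∑ i, ∑ j, v i * g i j * el j with hqv
  set r1 := (c * pu - b * pv) / (a * c - b ^ 2) with hr1
  set r2 := (a * pv - b * pu) / (a * c - b ^ 2) with hr2
  set r3 := (c * qu - b * qv) / (a * c - b ^ 2) with hr3
  set r4 := (a * qv - b * qu) / (a * c - b ^ 2) with hr4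
  set s : Fin 4 → ℝ := fun m => ek m - r1 * u m - r2 * v m with hs
  set t : Fin 4 → ℝ := fun m => el m - r3 * u m - r4 * v m with ht
  -- orthogonality of s, t to u, v
  have haus : ∑ i, ∑ j, u i * g i j * s j = 0 := by
    simp only [hs]
    rw [ip_lin, ← hpu, ← ha, ← hb, hr1, hr2]
    rw [div_mul_eq_mul_div, div_mul_eq_mul_div, sub_sub, ← add_div, sub_eq_zero, eq_div_iff hnondeg]
    ring
  have havs : ∑ i, ∑ j, v i * g i j * s j = 0 := by
    simp only [hs]
    rw [ip_lin, ip_symm g hgs v u, ← hpv, ← hb, ← hc, hr1, hr2]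
    rw [div_mul_eq_mul_div, div_mul_eq_mul_div, sub_sub, ← add_div, sub_eq_zero, eq_div_iff hnondeg]
    ring
  have haut : ∑ i, ∑ j, u i * g i j * t j = 0 := by
    simp only [ht]
    rw [ip_lin, ← hqu, ← ha, ← hb, hr3, hr4]
    rw [div_mul_eq_mul_div, div_mul_eq_mul_div, sub_sub, ← add_div, sub_eq_zero, eq_div_iff hnondeg]
    ring
  have havt : ∑ i, ∑ j, v i * g i j * t j = 0 := by
    simp only [ht]
    rw [ip_lin, ip_symm g hgs v u, ← hqv, ← hb, ← hc, hr3, hr4]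
    rw [div_mul_eq_mul_div, div_mul_eq_mul_div, sub_sub, ← add_div, sub_eq_zero, eq_div_iff hnondeg]
    ring
  -- evaluation of s and t
  have hsev : ∀ m, s m = (if m = k0 then (1:ℝ) else 0) - r1 * u m - r2 * v m := by
    intro m; simp only [hs, hek]
  have htev : ∀ m, t m = (if m = l0 then (1:ℝ) else 0) - r3 * u m - r4 * v m := by
    intro m; simp only [ht, hel]
  -- the basis matrix
  set T : Matrix (Fin 4) (Fin 4) ℝ := Matrix.of ![u, v, s, t] with hT
  have hT0 : ∀ m, T 0 m = u m := fun m => by rw [hT]; rfl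
  have hT1 : ∀ m, T 1 m = v m := fun m => by rw [hT]; rfl
  have hT2 : ∀ m, T 2 m = s m := fun m => by rw [hT]; rfl
  have hT3 : ∀ m, T 3 m = t m := fun m => by rw [hT]; rfl
  have hTind : LinearIndependent ℝ ![u, v, s, t] := by
    rw [Fintype.linearIndependent_iff]
    intro co hco
    simp only [Fin.sum_univ_four, Matrix.cons_val_zero, Matrix.cons_val_one, Matrix.head_cons,
      Matrix.cons_val_two, Matrix.cons_val_three, Matrix.tail_cons, Matrix.head_fin_const] at hco
    have e1 := congrFun hco i0
    have e2 := congrFun hco j0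
    have e3 := congrFun hco k0
    have e4 := congrFun hco l0
    simp only [Pi.add_apply, Pi.smul_apply, smul_eq_mul, Pi.zero_apply, hsev, htev] at e1 e2 e3 e4
    rw [if_neg hik, if_neg hil] at e1
    rw [if_neg hjk, if_neg hjl] at e2
    rw [if_neg hkl] at e3
    rw [if_neg (Ne.symm hkl)] at e4
    simp only [if_true] at e3 e4
    have hq0 : (co 0 - co 2 * r1 - co 3 * r3) * (u i0 * v j0 - u j0 * v i0) = 0 := by
      linear_combination v j0 * e1 - v i0 * e2
    have hq1 : (co 1 - co 2 * r2 - co 3 * r4) * (u i0 * v j0 - u j0 * v i0) = 0 := by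
      linear_combination u i0 * e2 - u j0 * e1
    have hq0' : co 0 - co 2 * r1 - co 3 * r3 = 0 := (mul_eq_zero.mp hq0).resolve_right hm
    have hq1' : co 1 - co 2 * r2 - co 3 * r4 = 0 := (mul_eq_zero.mp hq1).resolve_right hm
    have hc2 : co 2 = 0 := by linear_combination e3 - u k0 * hq0' - v k0 * hq1'
    have hc3 : co 3 = 0 := by linear_combination e4 - u l0 * hq0' - v l0 * hq1'
    have hc0 : co 0 = 0 := by linear_combination hq0' + r1 * hc2 + r3 * hc3
    have hc1 : co 1 = 0 := by linear_combination hq1' + r2 * hc2 + r4 * hc3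
    intro i
    fin_cases i
    · exact hc0
    · exact hc1
    · exact hc2
    · exact hc3
  have hTrows : LinearIndependent ℝ (fun i : Fin 4 => T i) := by rw [hT]; exact hTind
  have hTunit : IsUnit T := Matrix.linearIndependent_rows_iff_isUnit.mp hTrows
  have hTdetUnit : IsUnit T.det := (Matrix.isUnit_iff_isUnit_det T).mp hTunit
  set K : Matrix (Fin 4) (Fin 4) ℝ := T⁻¹ with hK
  have hKT : K * T = 1 := Matrix.nonsing_inv_mul T hTdetUnit
  have hTK : T * K = 1 := Matrix.mul_nonsing_inv T hTdetUnit
  have hdelta : ∀ i m, (if i = m then (1:ℝ) else 0)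
      = K i 0 * u m + K i 1 * v m + K i 2 * s m + K i 3 * t m := by
    intro i m
    have h := congrFun (congrFun hKT i) m
    simp only [Matrix.mul_apply, Fin.sum_univ_four, Matrix.one_apply, hT0, hT1, hT2, hT3] at h
    exact h.symm
  clear_value a b c ek el pu pv qu qv r1 r2 r3 r4 s t T K
  -- nullity of u, v in all four slots
  have hu2R : ∀ i k l, ∑ j, u j * R i j k l = 0 := by
    intro i k l
    have h := hu i k l
    simp only [Fin.sum_univ_four] at h ⊢
    linear_combination u 0 * hR1 i 0 k l + u 1 * hR1 i 1 k l + u 2 * hR1 i 2 k l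
      + u 3 * hR1 i 3 k l - h
  have hv2R : ∀ i k l, ∑ j, v j * R i j k l = 0 := by
    intro i k l
    have h := hv i k l
    simp only [Fin.sum_univ_four] at h ⊢
    linear_combination v 0 * hR1 i 0 k l + v 1 * hR1 i 1 k l + v 2 * hR1 i 2 k l
      + v 3 * hR1 i 3 k l - h
  have hu3R : ∀ i j l, ∑ k, u k * R i j k l = 0 := by
    intro i j l
    have h := hu l i j
    simp only [Fin.sum_univ_four] at h ⊢
    linear_combination u 0 * hR3 i j 0 l + u 1 * hR3 i j 1 l + u 2 * hR3 i j 2 l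
      + u 3 * hR3 i j 3 l + h
  have hv3R : ∀ i j l, ∑ k, v k * R i j k l = 0 := by
    intro i j l
    have h := hv l i j
    simp only [Fin.sum_univ_four] at h ⊢
    linear_combination v 0 * hR3 i j 0 l + v 1 * hR3 i j 1 l + v 2 * hR3 i j 2 l
      + v 3 * hR3 i j 3 l + h
  have hu4R : ∀ i j k, ∑ l, u l * R i j k l = 0 := by
    intro i j k
    have h := hu2R k i j
    simp only [Fin.sum_univ_four] at h ⊢
    linear_combination u 0 * hR3 i j k 0 + u 1 * hR3 i j k 1 + u 2 * hR3 i j k 2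
      + u 3 * hR3 i j k 3 + h
  have hv4R : ∀ i j k, ∑ l, v l * R i j k l = 0 := by
    intro i j k
    have h := hv2R k i j
    simp only [Fin.sum_univ_four] at h ⊢
    linear_combination v 0 * hR3 i j k 0 + v 1 * hR3 i j k 1 + v 2 * hR3 i j k 2
      + v 3 * hR3 i j k 3 + h
  -- first contraction: the first two slots
  have hformA : ∀ k l i j, R i j k l
      = (K i 2 * K j 3 - K j 2 * K i 3) * (∑ m, ∑ n, s m * t n * R m n k l) := by
    intro k l
    exact exp_lemma (fun i j => R i j k l) u v s t
      (fun i => K i 0) (fun i => K i 1) (fun i => K i 2) (fun i => K i 3) hdelta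
      (fun j => hu j k l) (fun j => hv j k l)
      (fun i => hu2R i k l) (fun i => hv2R i k l)
      (fun i j => hR1 i j k l)
  -- second contraction: the last two slots
  have hn1u : ∀ l, ∑ k, u k * (∑ m, ∑ n, s m * t n * R m n k l) = 0 := by
    intro l
    have e : ∑ k, u k * (∑ m, ∑ n, s m * t n * R m n k l)
        = ∑ m, ∑ n, s m * t n * (∑ k, u k * R m n k l) := by
      simp only [Fin.sum_univ_four]; ring
    rw [e]; simp [hu3R]
  have hn1v : ∀ l, ∑ k, v k * (∑ m, ∑ n, s m * t n * R m n k l) = 0 := by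
    intro l
    have e : ∑ k, v k * (∑ m, ∑ n, s m * t n * R m n k l)
        = ∑ m, ∑ n, s m * t n * (∑ k, v k * R m n k l) := by
      simp only [Fin.sum_univ_four]; ring
    rw [e]; simp [hv3R]
  have hn2u : ∀ k, ∑ l, u l * (∑ m, ∑ n, s m * t n * R m n k l) = 0 := by
    intro k
    have e : ∑ l, u l * (∑ m, ∑ n, s m * t n * R m n k l)
        = ∑ m, ∑ n, s m * t n * (∑ l, u l * R m n k l) := by
      simp only [Fin.sum_univ_four]; ring
    rw [e]; simp [hu4R]
  have hn2v : ∀ k, ∑ l, v l * (∑ m, ∑ n, s m * t n * R m n k l) = 0 := by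
    intro k
    have e : ∑ l, v l * (∑ m, ∑ n, s m * t n * R m n k l)
        = ∑ m, ∑ n, s m * t n * (∑ l, v l * R m n k l) := by
      simp only [Fin.sum_univ_four]; ring
    rw [e]; simp [hv4R]
  have hanti2 : ∀ k l, (∑ m, ∑ n, s m * t n * R m n k l)
      = -(∑ m, ∑ n, s m * t n * R m n l k) := by
    intro k l
    simp only [Fin.sum_univ_four]
    linear_combination (s 0 * t 0) * hR2 0 0 k l + (s 0 * t 1) * hR2 0 1 k l
      + (s 0 * t 2) * hR2 0 2 k l + (s 0 * t 3) * hR2 0 3 k l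
      + (s 1 * t 0) * hR2 1 0 k l + (s 1 * t 1) * hR2 1 1 k l
      + (s 1 * t 2) * hR2 1 2 k l + (s 1 * t 3) * hR2 1 3 k l
      + (s 2 * t 0) * hR2 2 0 k l + (s 2 * t 1) * hR2 2 1 k l
      + (s 2 * t 2) * hR2 2 2 k l + (s 2 * t 3) * hR2 2 3 k l
      + (s 3 * t 0) * hR2 3 0 k l + (s 3 * t 1) * hR2 3 1 k l
      + (s 3 * t 2) * hR2 3 2 k l + (s 3 * t 3) * hR2 3 3 k l
  have hformB : ∀ k l, (∑ m, ∑ n, s m * t n * R m n k l)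
      = (K k 2 * K l 3 - K l 2 * K k 3)
        * (∑ p, ∑ q, s p * t q * (∑ m, ∑ n, s m * t n * R m n p q)) :=
    exp_lemma (fun k l => ∑ m, ∑ n, s m * t n * R m n k l) u v s t
      (fun i => K i 0) (fun i => K i 1) (fun i => K i 2) (fun i => K i 3) hdelta
      hn1u hn1v hn2u hn2v hanti2
  have hform : ∀ i j k l, R i j k l
      = (K i 2 * K j 3 - K j 2 * K i 3) * (K k 2 * K l 3 - K l 2 * K k 3)
        * (∑ p, ∑ q, s p * t q * (∑ m, ∑ n, s m * t n * R m n p q)) := by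
    intro i j k l
    rw [hformA k l i j, hformB k l]
    ring
  set kp := ∑ p, ∑ q, s p * t q * (∑ m, ∑ n, s m * t n * R m n p q) with hkp
  clear_value kp
  -- rewrite the scalar curvature hypothesis
  have hexp : (∑ i, ∑ j, ∑ k, ∑ l, g⁻¹ i k * g⁻¹ j l *
        ((K i 2 * K j 3 - K j 2 * K i 3) * (K k 2 * K l 3 - K l 2 * K k 3) * kp))
      = kp * (2 * ((∑ i, ∑ k, g⁻¹ i k * K i 2 * K k 2) * (∑ i, ∑ k, g⁻¹ i k * K i 3 * K k 3)
        - (∑ i, ∑ k, g⁻¹ i k * K i 2 * K k 3) * (∑ i, ∑ k, g⁻¹ i k * K i 3 * K k 2))) :=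
    scal_expand g⁻¹ (fun i => K i 2) (fun i => K i 3) kp
  simp only [hform] at hscal
  rw [hexp] at hscal
  -- the Gram matrix of u, v, s, t
  set sa := ∑ i, ∑ j, s i * g i j * s j with hsa
  set sb := ∑ i, ∑ j, s i * g i j * t j with hsb
  set sc := ∑ i, ∑ j, t i * g i j * t j with hsc
  clear_value sa sb sc
  have hTG : ∀ p q, (T * g * Tᵀ) p q = ∑ n, (∑ m, T p m * g m n) * T q n := by
    intro p q
    simp [Matrix.mul_apply, Matrix.transpose_apply]
  have hE : ∀ (x y : Fin 4 → ℝ) (p q : Fin 4), (∀ m, T p m = x m) → (∀ m, T q m = y m) →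
      (T * g * Tᵀ) p q = ∑ i, ∑ j, x i * g i j * y j := by
    intro x y p q hx hy
    rw [hTG]
    simp only [hx, hy]
    exact sum4_entry g x y
  have hG : T * g * Tᵀ = !![a, b, 0, 0; b, c, 0, 0; 0, 0, sa, sb; 0, 0, sb, sc] := by
    rw [eta_fin_four (T * g * Tᵀ)]
    rw [hE u u 0 0 hT0 hT0, hE u v 0 1 hT0 hT1, hE u s 0 2 hT0 hT2, hE u t 0 3 hT0 hT3,
        hE v u 1 0 hT1 hT0, hE v v 1 1 hT1 hT1, hE v s 1 2 hT1 hT2, hE v t 1 3 hT1 hT3,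
        hE s u 2 0 hT2 hT0, hE s v 2 1 hT2 hT1, hE s s 2 2 hT2 hT2, hE s t 2 3 hT2 hT3,
        hE t u 3 0 hT3 hT0, hE t v 3 1 hT3 hT1, hE t s 3 2 hT3 hT2, hE t t 3 3 hT3 hT3]
    rw [ip_symm g hgs v u, ip_symm g hgs s u, ip_symm g hgs s v, ip_symm g hgs t u,
        ip_symm g hgs t v, ip_symm g hgs t s, haus, havs, haut, havt,
        ← ha, ← hb, ← hc, ← hsa, ← hsb, ← hsc]
  -- determinant computation gives nondegeneracy on the orthogonal complement
  have hdet1 : (T * g * Tᵀ).det = T.det * g.det * T.det := by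
    rw [Matrix.det_mul, Matrix.det_mul, Matrix.det_transpose]
  have hdet2 := det_block a b c sa sb sc
  have hDS : sa * sc - sb ^ 2 ≠ 0 := by
    have hprod : (a*c - b^2) * (sa*sc - sb^2) = T.det * g.det * T.det := by
      rw [← hdet2, ← hG]; exact hdet1
    have hTd : T.det ≠ 0 := hTdetUnit.ne_zero
    have hgd : g.det ≠ 0 := hg.ne_zero
    have : (a*c - b^2) * (sa*sc - sb^2) ≠ 0 := by
      rw [hprod]; exact mul_ne_zero (mul_ne_zero hTd hgd) hTd
    exact right_ne_zero_of_mul this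
  -- invert the Gram matrix
  have hGF := block_inv a b c sa sb sc hnondeg hDS
  have hgig : g⁻¹ * g = 1 := Matrix.nonsing_inv_mul g hg
  have hMid : Kᵀ * g⁻¹ * K * (T * g * Tᵀ) = 1 := by
    calc Kᵀ * g⁻¹ * K * (T * g * Tᵀ) = Kᵀ * g⁻¹ * (K * T) * (g * Tᵀ) := by
          simp only [Matrix.mul_assoc]
    _ = Kᵀ * (g⁻¹ * g) * Tᵀ := by rw [hKT, mul_one]; simp only [Matrix.mul_assoc]
    _ = Kᵀ * Tᵀ := by rw [hgig, mul_one]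
    _ = (T * K)ᵀ := (Matrix.transpose_mul T K).symm
    _ = 1 := by rw [hTK]; exact Matrix.transpose_one
  have hMF : Kᵀ * g⁻¹ * K =
      !![c/(a*c-b^2), -(b/(a*c-b^2)), 0, 0; -(b/(a*c-b^2)), a/(a*c-b^2), 0, 0;
         0, 0, sc/(sa*sc-sb^2), -(sb/(sa*sc-sb^2)); 0, 0, -(sb/(sa*sc-sb^2)), sa/(sa*sc-sb^2)] := by
    calc Kᵀ * g⁻¹ * K = Kᵀ * g⁻¹ * K * ((T * g * Tᵀ) *
        !![c/(a*c-b^2), -(b/(a*c-b^2)), 0, 0; -(b/(a*c-b^2)), a/(a*c-b^2), 0, 0;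
           0, 0, sc/(sa*sc-sb^2), -(sb/(sa*sc-sb^2)); 0, 0, -(sb/(sa*sc-sb^2)), sa/(sa*sc-sb^2)]) := by
          rw [hG, hGF, mul_one]
    _ = (Kᵀ * g⁻¹ * K * (T * g * Tᵀ)) *
        !![c/(a*c-b^2), -(b/(a*c-b^2)), 0, 0; -(b/(a*c-b^2)), a/(a*c-b^2), 0, 0;
           0, 0, sc/(sa*sc-sb^2), -(sb/(sa*sc-sb^2)); 0, 0, -(sb/(sa*sc-sb^2)), sa/(sa*sc-sb^2)] := by
          simp only [Matrix.mul_assoc]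
    _ = _ := by rw [hMid, one_mul]
  -- extract the entries
  have hA : (∑ i, ∑ k, g⁻¹ i k * K i 2 * K k 2) = sc/(sa*sc-sb^2) := by
    have h := congrFun (congrFun hMF 2) 2
    simp [Matrix.mul_apply, Matrix.transpose_apply, Fin.sum_univ_four, Matrix.vecHead,
      Matrix.vecTail] at h
    simp only [Fin.sum_univ_four]
    linear_combination h
  have hC : (∑ i, ∑ k, g⁻¹ i k * K i 3 * K k 3) = sa/(sa*sc-sb^2) := by
    have h := congrFun (congrFun hMF 3) 3
    simp [Matrix.mul_apply, Matrix.transpose_apply, Fin.sum_univ_four, Matrix.vecHead,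
      Matrix.vecTail] at h
    simp only [Fin.sum_univ_four]
    linear_combination h
  have hB1 : (∑ i, ∑ k, g⁻¹ i k * K i 2 * K k 3) = -(sb/(sa*sc-sb^2)) := by
    have h := congrFun (congrFun hMF 2) 3
    simp [Matrix.mul_apply, Matrix.transpose_apply, Fin.sum_univ_four, Matrix.vecHead,
      Matrix.vecTail] at h
    simp only [Fin.sum_univ_four]
    linear_combination h
  have hB2 : (∑ i, ∑ k, g⁻¹ i k * K i 3 * K k 2) = -(sb/(sa*sc-sb^2)) := by
    have h := congrFun (congrFun hMF 3) 2
    simp [Matrix.mul_apply, Matrix.transpose_apply, Fin.sum_univ_four, Matrix.vecHead,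
      Matrix.vecTail] at h
    simp only [Fin.sum_univ_four]
    linear_combination h
  rw [hA, hC, hB1, hB2] at hscal
  have hval : (2 : ℝ) * (sc/(sa*sc-sb^2) * (sa/(sa*sc-sb^2))
      - -(sb/(sa*sc-sb^2)) * -(sb/(sa*sc-sb^2))) = 2 / (sa*sc-sb^2) := by
    field_simp
  rw [hval] at hscal
  have hkp0 : kp = 0 := by
    rcases mul_eq_zero.mp hscal with h | h
    · exact h
    · exact absurd h (div_ne_zero two_ne_zero hDS)
  intro i j k l
  rw [hform i j k l, hkp0]
  ring
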